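/- For every 2π-periodic continuous function u : ℝ → ℝ, the Dirichlet form E₂(u, u) := (∫₀^{2π} u)² + ∫₀^{2π} 𝒰₀(θ)²/w(θ) dθ + (1/2)·∫₀^{2π} u₀(θ)²/w(θ) dθ satisfies the coercivity estimate E₂(u, u) ≥ (1/2)·∫₀^{2π} u(θ)²/w(θ) dθ. -/

import Mathlib

noncomputable section

open MeasureTheory

/-- `Ψ₀(x)`: the non-disordered fixed-point function. -/
def Psi0 (x : ℝ) : ℝ :=
  (∫ θ in (0:ℝ)..(2 * Real.pi), Real.cos θ * Real.exp (x * Real.cos θ)) /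
    (∫ θ in (0:ℝ)..(2 * Real.pi), Real.exp (x * Real.cos θ))

/-- The potential `Φ(θ) = −2Kr₀·cos θ`. -/
def Phi (K r₀ θ : ℝ) : ℝ := -2 * K * r₀ * Real.cos θ

/-- The weight `w(θ) = exp(−Φ(θ))/∫₀^{2π} exp(−Φ)`. -/
def w (K r₀ θ : ℝ) : ℝ :=
  Real.exp (-Phi K r₀ θ) / (∫ u in (0:ℝ)..(2 * Real.pi), Real.exp (-Phi K r₀ u))

/-- The Fokker–Planck operator `Ã₂v = (1/2)v'' + (Kr₀ sin(θ) v)'`. -/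
def A2 (K r₀ : ℝ) (v : ℝ → ℝ) (θ : ℝ) : ℝ :=
  (1 / 2) * deriv (deriv v) θ + deriv (fun u => K * r₀ * Real.sin u * v u) θ

/-- The `2π`-periodic primitive of a zero-mean `a`, normalized so that
`∫₀^{2π} 𝒜/k = 0` for the weight `k`. -/
def prim (k a : ℝ → ℝ) (θ : ℝ) : ℝ :=
  (∫ u in (0:ℝ)..θ, a u) -
    (∫ s in (0:ℝ)..(2 * Real.pi), (∫ u in (0:ℝ)..s, a u) / k s) /
      (∫ s in (0:ℝ)..(2 * Real.pi), 1 / k s)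

/-- `v₀ = v − (∫₀^{2π} v)·w`, the zero-mean part of `v`. -/
def vz (K r₀ : ℝ) (v : ℝ → ℝ) (θ : ℝ) : ℝ :=
  v θ - (∫ u in (0:ℝ)..(2 * Real.pi), v u) * w K r₀ θ

/-- The weighted Sobolev inner product `⟨u, v⟩_{−1,w}`. -/
def pairW (K r₀ : ℝ) (u v : ℝ → ℝ) : ℝ :=
  (∫ θ in (0:ℝ)..(2 * Real.pi), u θ) * (∫ θ in (0:ℝ)..(2 * Real.pi), v θ) +
    ∫ θ in (0:ℝ)..(2 * Real.pi),
      prim (w K r₀) (vz K r₀ u) θ * prim (w K r₀) (vz K r₀ v) θ / w K r₀ θ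

/-- Coercivity of the Dirichlet form associated to the Fokker–Planck operator. -/
theorem stmt13 (K r₀ : ℝ) (hK : 1 < K) (hr₀ : 0 < r₀) (hfix : r₀ = Psi0 (2 * K * r₀))
    (u : ℝ → ℝ) (hu : Continuous u) (hper : Function.Periodic u (2 * Real.pi)) :
    (1 / 2) * (∫ θ in (0:ℝ)..(2 * Real.pi), (u θ) ^ 2 / w K r₀ θ) ≤
      (∫ θ in (0:ℝ)..(2 * Real.pi), u θ) ^ 2 +
        (∫ θ in (0:ℝ)..(2 * Real.pi), (prim (w K r₀) (vz K r₀ u) θ) ^ 2 / w K r₀ θ) +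
        (1 / 2) * ∫ θ in (0:ℝ)..(2 * Real.pi), (vz K r₀ u θ) ^ 2 / w K r₀ θ := by
  set c := ∫ θ in (0:ℝ)..(2 * Real.pi), u θ with hc
  have hπ : (0:ℝ) < 2 * Real.pi := by positivity
  have hexpc : Continuous fun θ => Real.exp (-Phi K r₀ θ) := by
    apply Real.continuous_exp.comp
    unfold Phi; fun_prop
  have hI : 0 < ∫ θ in (0:ℝ)..(2 * Real.pi), Real.exp (-Phi K r₀ θ) := by
    apply intervalIntegral.intervalIntegral_pos_of_pos_on
      (hexpc.intervalIntegrable _ _) (fun x _ => Real.exp_pos _) hπ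
  have hWc : Continuous (w K r₀) := by
    unfold w; exact hexpc.div_const _
  have hWpos : ∀ θ, 0 < w K r₀ θ := fun θ => div_pos (Real.exp_pos _) hI
  have hWint : ∫ θ in (0:ℝ)..(2 * Real.pi), w K r₀ θ = 1 := by
    unfold w
    rw [intervalIntegral.integral_div]
    exact div_self hI.ne'
  have hu0c : Continuous (vz K r₀ u) := hu.sub (continuous_const.mul hWc)
  have hu0int : ∫ θ in (0:ℝ)..(2 * Real.pi), vz K r₀ u θ = 0 := by
    unfold vz
    rw [intervalIntegral.integral_sub (hu.intervalIntegrable _ _)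
      ((show Continuous (fun θ => (∫ u_1 in (0:ℝ)..(2 * Real.pi), u u_1) * w K r₀ θ) from
        continuous_const.mul hWc).intervalIntegrable _ _),
      intervalIntegral.integral_const_mul, hWint, mul_one, ← hc, sub_self]
  have hq : Continuous fun θ => (vz K r₀ u θ) ^ 2 / w K r₀ θ :=
    (hu0c.pow 2).div hWc fun θ => (hWpos θ).ne'
  have hsplit : ∫ θ in (0:ℝ)..(2 * Real.pi), (u θ) ^ 2 / w K r₀ θ
      = (∫ θ in (0:ℝ)..(2 * Real.pi), (vz K r₀ u θ) ^ 2 / w K r₀ θ) + c ^ 2 := by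
    have heq : ∀ θ ∈ Set.uIcc (0:ℝ) (2 * Real.pi), (u θ) ^ 2 / w K r₀ θ
        = (vz K r₀ u θ) ^ 2 / w K r₀ θ + (2 * c) * vz K r₀ u θ + c ^ 2 * w K r₀ θ := by
      intro θ _
      have hw := (hWpos θ).ne'
      have hu' : u θ = vz K r₀ u θ + c * w K r₀ θ := by unfold vz; ring
      rw [hu']; field_simp; ring
    rw [intervalIntegral.integral_congr heq,
      intervalIntegral.integral_add
        ((hq.intervalIntegrable _ _).add ((show Continuous (fun θ => (2 * c) * vz K r₀ u θ) from
          continuous_const.mul hu0c).intervalIntegrable _ _))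
        ((show Continuous (fun θ => c ^ 2 * w K r₀ θ) from
          continuous_const.mul hWc).intervalIntegrable _ _),
      intervalIntegral.integral_add (hq.intervalIntegrable _ _)
        ((show Continuous (fun θ => (2 * c) * vz K r₀ u θ) from
          continuous_const.mul hu0c).intervalIntegrable _ _),
      intervalIntegral.integral_const_mul, intervalIntegral.integral_const_mul,
      hu0int, hWint]
    ring
  have hP : 0 ≤ ∫ θ in (0:ℝ)..(2 * Real.pi), (prim (w K r₀) (vz K r₀ u) θ) ^ 2 / w K r₀ θ := by
    apply intervalIntegral.integral_nonneg hπ.le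
    intro x _
    exact div_nonneg (sq_nonneg _) (hWpos x).le
  have hc2 : 0 ≤ c ^ 2 := sq_nonneg c
  rw [hsplit]
  linarith
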